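/- For all positive integers r and n with r even, F_r * (∑_{k=1}^n F_{2rk}) = F_{rn} * F_{rn+r}. -/

import Mathlib

open Finset

def L : ℕ → ℤ
  | 0 => 2
  | 1 => 1
  | n + 2 => L (n + 1) + L n

def F (n : ℕ) : ℤ := Nat.fib n

lemma F_add_two (n : ℕ) : F (n + 2) = F n + F (n + 1) := by
  unfold F; rw [Nat.fib_add_two]; push_cast; ring

lemma F_add (m n : ℕ) : F (m + n + 1) = F m * F n + F (m + 1) * F (n + 1) := by
  unfold F; rw [Nat.fib_add]; push_cast; ring

lemma L_eq : ∀ n, L (n + 1) = F n + F (n + 2)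
  | 0 => by simp [L, F]
  | 1 => by simp [L, F]; decide
  | n + 2 => by
    have h1 := L_eq n
    have h2 := L_eq (n + 1)
    have e1 := F_add_two n
    have e2 := F_add_two (n + 1)
    have e3 := F_add_two (n + 2)
    show L (n + 1 + 2) = _
    rw [L]
    linarith [h1, h2, e1, e2, e3]

lemma cassini : ∀ k, F (k + 1) ^ 2 - F k * F (k + 2) = (-1 : ℤ) ^ k
  | 0 => by simp [F]
  | k + 1 => by
    have ih := cassini k
    have e1 := F_add_two k
    have e2 := F_add_two (k + 1)
    have : F (k + 2) ^ 2 - F (k + 1) * F (k + 3) = -((F (k+1))^2 - F k * F (k+2)) := by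
      rw [e1] at *
      rw [show k + 3 = k + 1 + 2 from rfl, e2]
      ring
    rw [this, ih]
    ring

lemma F_double (m : ℕ) : F (2 * (m + 1)) = F (m + 1) * L (m + 1) := by
  rw [L_eq]
  rw [show 2 * (m + 1) = (m + 1) + m + 1 by ring, F_add]
  ring

lemma key (a k : ℕ) (hk : Even k) (hk1 : 1 ≤ k) :
    F (a + 2 * k) = F a + F k * L (a + k) := by
  obtain ⟨k, rfl⟩ : ∃ j, k = j + 1 := ⟨k - 1, by omega⟩
  rw [show a + (k + 1) = a + k + 1 from rfl, L_eq]
  rw [show a + 2 * (k + 1) = (a + k) + (k + 1) + 1 by ring, F_add]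
  have h1 : F (a + k + 1) = F a * F k + F (a + 1) * F (k + 1) := F_add a k
  have h3 : F (a + k + 2) = F a * F (k + 1) + F (a + 1) * F (k + 2) := F_add a (k + 1)
  have hc := cassini k
  have hsign : ((-1 : ℤ)) ^ k = -1 := by
    rcases hk with ⟨j, hj⟩
    have : k = 2 * j - 1 := by omega
    obtain ⟨j, rfl⟩ : ∃ i, j = i + 1 := ⟨j - 1, by omega⟩
    subst this
    rw [show 2 * (j + 1) - 1 = 2 * j + 1 by omega]
    simp [pow_succ, pow_mul]
  rw [hsign] at hc
  have e2 := F_add_two k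
  rw [h1, h3]
  simp only [show k + 1 + 1 = k + 2 from rfl]
  linear_combination (-(F a)) * hc

theorem stmt0 (r n : ℕ) (hr : 0 < r) (hn : 0 < n) (hre : Even r) :
    F r * ∑ k ∈ Finset.Icc 1 n, F (2 * r * k) = F (r * n) * F (r * n + r) := by
  induction n with
  | zero => omega
  | succ n ih =>
    rcases Nat.eq_zero_or_pos n with hn0 | hn0
    · subst hn0
      simp only [Finset.Icc_self, Finset.sum_singleton, Nat.mul_one]
      rw [show 2 * r = r + r by ring, show r * (0 + 1) = r by ring]
    · have ih := ih hn0
      rw [Finset.sum_Icc_succ_top (by omega)]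
      rw [mul_add, ih]
      have hkey : F (r * n + 2 * r) = F (r * n) + F r * L (r * n + r) := key (r * n) r hre hr
      have hdbl : F (2 * (r * n + r)) = F (r * n + r) * L (r * n + r) := by
        have hpos : 0 < r * n + r := by positivity
        obtain ⟨m, hm⟩ : ∃ m, r * n + r = m + 1 := ⟨r * n + r - 1, by omega⟩
        rw [hm]; exact F_double m
      have h1 : 2 * r * (n + 1) = 2 * (r * n + r) := by ring
      have h2 : r * (n + 1) = r * n + r := by ring
      rw [h1, h2, hdbl, show r * n + r + r = r * n + 2 * r by ring, hkey]
      ring
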